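/- Let A = ℤ⟨X,Y⟩ and p = 2. Then the element ⟨X⟩·⟨Y⟩ = (XY, X²Y², X⁴Y⁴, ...) of X(A) does not lie in the topological closure of the additive subgroup of A^{ℕ₀} generated by the set { V^n(⟨a⟩) : n ∈ ℕ₀, a ∈ A } together with [X(A),X(A)]. In particular, HH₀(X(A)) := X(A)/closure([X(A),X(A)]) is not topologically generated by the elements V^n(⟨a⟩). -/

import Mathlib

/-- Verschiebung operator: `V(a₀,a₁,...) = p·(0,a₀,a₁,...)`. -/
def Vb (p : ℕ) {A : Type*} [Ring A] (a : ℕ → A) : ℕ → A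
  | 0 => 0
  | n + 1 => (p : A) * a n

/-- Teichmüller element: `⟨a⟩ = (a, a^p, a^{p²}, ...)`. -/
def tm (p : ℕ) {A : Type*} [Ring A] (a : A) : ℕ → A := fun n => a ^ p ^ n

/-- Generators of `X(A)`: all `V^m(⟨a₁⟩⋯⟨a_r⟩)` with `m ∈ ℕ₀`, `r ≥ 1`, `aᵢ ∈ A`. -/
def XAgen (p : ℕ) (A : Type*) [Ring A] : Set (ℕ → A) :=
  {x | ∃ (m : ℕ) (l : List A), l ≠ [] ∧ x = (Vb p)^[m] ((l.map (tm p)).prod)}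

/-- `X(A)`: the topological closure of the additive subgroup generated by `XAgen`. -/
noncomputable def XA (p : ℕ) (A : Type*) [Ring A] [TopologicalSpace A] [DiscreteTopology A] :
    AddSubgroup (ℕ → A) :=
  (AddSubgroup.closure (XAgen p A)).topologicalClosure

/-- The set of commutators `xy − yx` with `x, y ∈ X(A)`. -/
def commXA (p : ℕ) (A : Type*) [Ring A] [TopologicalSpace A] [DiscreteTopology A] :
    Set (ℕ → A) :=
  {z | ∃ x ∈ XA p A, ∃ y ∈ XA p A, z = x * y - y * x}

/-- Words in the two letters `X, Y`. -/
abbrev FW := FreeMonoid (Fin 2)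

/-- `A = ℤ⟨X,Y⟩`. -/
abbrev A2 := MonoidAlgebra ℤ FW

instance : TopologicalSpace A2 := ⊥
instance : DiscreteTopology A2 := ⟨rfl⟩

/-- The variable `X`. -/
noncomputable def Xv : A2 := MonoidAlgebra.of ℤ FW (FreeMonoid.of 0)

/-- The variable `Y`. -/
noncomputable def Yv : A2 := MonoidAlgebra.of ℤ FW (FreeMonoid.of 1)

/-- The set `{ V^n(⟨a⟩) : n ∈ ℕ₀, a ∈ A }`. -/
def VTeich : Set (ℕ → A2) := {x | ∃ (n : ℕ) (a : A2), x = (Vb 2)^[n] (tm 2 a)}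

/-! ### Auxiliary: a mod-2 trace functional detecting the cyclic word `XXYY`. -/

/-- The additive functional `A2 → ℤ/2` that sums (mod 2) the coefficients of all words that
are cyclic rotations of `XXYY = [0,0,1,1]`. -/
noncomputable def psiF : A2 →+ ZMod 2 :=
  (Finsupp.liftAddHom
    (fun w : FW => if FreeMonoid.toList w ~r [0, 0, 1, 1] then (Int.castAddHom (ZMod 2)) else 0)).comp
    MonoidAlgebra.coeffAddEquiv.toAddMonoidHom

lemma psi_single (w : FW) (c : ℤ) :
    psiF (MonoidAlgebra.single w c)
      = if FreeMonoid.toList w ~r [0, 0, 1, 1] then (c : ZMod 2) else 0 := by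
  show (Finsupp.liftAddHom
    (fun w : FW => if FreeMonoid.toList w ~r [0, 0, 1, 1] then (Int.castAddHom (ZMod 2)) else 0))
      (Finsupp.single w c) = _
  rw [Finsupp.liftAddHom_apply_single]
  split <;> simp

lemma psi_single_single (u v : FW) (c d : ℤ) :
    psiF (MonoidAlgebra.single u c * MonoidAlgebra.single v d)
      = psiF (MonoidAlgebra.single v d * MonoidAlgebra.single u c) := by
  rw [MonoidAlgebra.single_mul_single, MonoidAlgebra.single_mul_single,
    psi_single, psi_single, mul_comm d c]
  have hrot : (FreeMonoid.toList (u * v) ~r [0, 0, 1, 1]) ↔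
      (FreeMonoid.toList (v * u) ~r [0, 0, 1, 1]) := by
    rw [FreeMonoid.toList_mul, FreeMonoid.toList_mul]
    exact ⟨fun h => (List.isRotated_append).trans h, fun h => (List.isRotated_append).trans h⟩
  by_cases h : FreeMonoid.toList (u * v) ~r [0, 0, 1, 1]
  · rw [if_pos h, if_pos (hrot.mp h)]
  · rw [if_neg h, if_neg (fun hh => h (hrot.mpr hh))]

lemma psi_trace_single (u : FW) (c : ℤ) (y : A2) :
    psiF (MonoidAlgebra.single u c * y) = psiF (y * MonoidAlgebra.single u c) := by
  induction y using MonoidAlgebra.induction with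
  | zero => simp
  | single_add v d y' _ _ ihy =>
    rw [mul_add, add_mul, map_add, map_add, ihy]
    congr 1
    exact psi_single_single u v c d

/-- `psiF` is a trace: it kills commutators. -/
lemma psi_trace (x y : A2) : psiF (x * y) = psiF (y * x) := by
  induction x using MonoidAlgebra.induction with
  | zero => simp
  | single_add u c x' _ _ ih =>
    rw [add_mul, mul_add, map_add, map_add, ih]
    congr 1
    exact psi_trace_single u c y

lemma sq_expand (s r : A2) : (s + r) * (s + r) = (s * s + r * r) + (s * r + r * s) := by
  rw [add_mul, mul_add, mul_add]; abel

/-- `psiF` kills squares (this uses `p = 2` and that no rotation of `XXYY` is a doubled word). -/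
lemma psi_sq (a : A2) : psiF (a * a) = 0 := by
  induction a using MonoidAlgebra.induction with
  | zero => simp
  | single_add w c r _ _ ih =>
    rw [sq_expand, map_add, map_add, map_add, ih, add_zero,
      psi_trace (MonoidAlgebra.single w c) r, CharTwo.add_self_eq_zero, add_zero,
      MonoidAlgebra.single_mul_single, psi_single]
    rw [if_neg]
    intro h
    have hlen : (FreeMonoid.toList (w * w)).length = 4 := h.perm.length_eq
    rw [FreeMonoid.toList_mul, List.length_append] at hlen
    have h2 : (FreeMonoid.toList w).length = 2 := by omega
    obtain ⟨a, b, hab⟩ := List.length_eq_two.mp h2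
    rw [FreeMonoid.toList_mul, hab] at h
    fin_cases a <;> fin_cases b <;> revert h <;> decide

lemma Vb_iterate_zero {A : Type*} [Ring A] (p : ℕ) (g : ℕ → A) (m : ℕ) :
    (Vb p)^[m + 1] g 0 = 0 := by
  rw [Function.iterate_succ_apply']
  rfl

lemma Vb_iterate_one {A : Type*} [Ring A] (p : ℕ) (g : ℕ → A) (m : ℕ) :
    (Vb p)^[m + 2] g 1 = 0 := by
  rw [Function.iterate_succ_apply']
  show (p : A) * ((Vb p)^[m + 1] g 0) = 0
  rw [Vb_iterate_zero, mul_zero]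

/-- `psiF` applied to coordinate 1 vanishes on every generator `V^n⟨a⟩`. -/
lemma psi_VTeich {f : ℕ → A2} (hf : f ∈ VTeich) : psiF (f 1) = 0 := by
  obtain ⟨n, a, rfl⟩ := hf
  match n with
  | 0 =>
    show psiF (tm 2 a 1) = 0
    have : tm 2 a 1 = a * a := by simp [tm, pow_succ, pow_one]
    rw [this, psi_sq]
  | 1 =>
    show psiF ((2 : A2) * tm 2 a 0) = 0
    have : (2 : A2) * tm 2 a 0 = a + a := by
      simp [tm, two_mul]
    rw [this, map_add, CharTwo.add_self_eq_zero]
  | (m + 2) =>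
    rw [Vb_iterate_one, map_zero]

/-- for `A = ℤ⟨X,Y⟩` and `p = 2`, the element `⟨X⟩·⟨Y⟩ ∈ X(A)` does not lie
in the topological closure of the additive subgroup of `A^{ℕ₀}` generated by the elements
`V^n(⟨a⟩)` together with `[X(A),X(A)]`; in particular `HH₀(X(A))` is not topologically
generated by the `V^n(⟨a⟩)`. -/
theorem stmt8 :
    tm 2 Xv * tm 2 Yv ∉
      closure ((AddSubgroup.closure (VTeich ∪ commXA 2 A2) : AddSubgroup (ℕ → A2)) :
        Set (ℕ → A2)) := by
  intro hmem
  -- the closed "kernel" set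
  set K : Set (ℕ → A2) := {f | psiF (f 1) = 0} with hKdef
  have hKclosed : IsClosed K := by
    have : K = (fun f : ℕ → A2 => f 1) ⁻¹' (psiF ⁻¹' {0}) := rfl
    rw [this]
    exact (isClosed_discrete _).preimage (continuous_apply 1)
  -- the subgroup generated by the generators lies in K
  have hsub : (AddSubgroup.closure (VTeich ∪ commXA 2 A2) : Set (ℕ → A2)) ⊆ K := by
    intro f hf
    refine AddSubgroup.closure_induction ?_ ?_ ?_ ?_ hf
    · intro x hx
      rcases hx with hx | hx
      · exact psi_VTeich hx
      · obtain ⟨u, _, v, _, rfl⟩ := hx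
        show psiF ((u * v - v * u) 1) = 0
        have : (u * v - v * u) 1 = u 1 * v 1 - v 1 * u 1 := rfl
        rw [this, map_sub, psi_trace, sub_self]
    · show psiF ((0 : ℕ → A2) 1) = 0
      simp
    · intro x y _ _ hx hy
      show psiF ((x + y) 1) = 0
      have : (x + y) 1 = x 1 + y 1 := rfl
      rw [this, map_add, hx, hy, add_zero]
    · intro x _ hx
      show psiF ((-x) 1) = 0
      have : (-x) 1 = -(x 1) := rfl
      rw [this, map_neg, hx, neg_zero]
  have hclos : closure ((AddSubgroup.closure (VTeich ∪ commXA 2 A2) : AddSubgroup (ℕ → A2)) :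
      Set (ℕ → A2)) ⊆ K := closure_minimal hsub hKclosed
  have hval : psiF ((tm 2 Xv * tm 2 Yv) 1) = 0 := hclos hmem
  -- but the value is 1
  have h1 : (tm 2 Xv * tm 2 Yv) 1 = Xv * Xv * (Yv * Yv) := by
    show tm 2 Xv 1 * tm 2 Yv 1 = _
    simp [tm, pow_succ, pow_one]
  rw [h1] at hval
  have hX : Xv = MonoidAlgebra.single (FreeMonoid.of 0) (1 : ℤ) := rfl
  have hY : Yv = MonoidAlgebra.single (FreeMonoid.of 1) (1 : ℤ) := rfl
  rw [hX, hY, MonoidAlgebra.single_mul_single, MonoidAlgebra.single_mul_single,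
    MonoidAlgebra.single_mul_single, psi_single] at hval
  have hlist : FreeMonoid.toList
      (FreeMonoid.of (0 : Fin 2) * FreeMonoid.of 0 * (FreeMonoid.of 1 * FreeMonoid.of 1))
      = [0, 0, 1, 1] := rfl
  rw [hlist, if_pos (List.IsRotated.refl _)] at hval
  norm_num at hval
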